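/- Let c ∈ (0, 1/2), c̃ = √(1−2c), and x ∈ ℝ. Then ∫₀^∞ ∫₀¹ t u γ(x t u) exp(−c t²u² − (1−u²)t²/2) du dt ≤ ((−log(2c))/(2c̃²)) · γ( (√π x / (−log(2c)√c)) · (1 − (√(2c)/c̃)·arcsin(c̃)) ). -/

import Mathlib

open MeasureTheory Real Set Filter intervalIntegral Topology

lemma gauss_mom1 {b : ℝ} (hb : 0 < b) :
    ∫ t in Set.Ioi (0:ℝ), t * Real.exp (-b * t ^ 2) = 1 / (2 * b) := by
  have hb' : b ≠ 0 := hb.ne'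
  have hderiv : ∀ t ∈ Set.Ici (0:ℝ), HasDerivAt (fun t : ℝ => -(2*b)⁻¹ * Real.exp (-b*t^2))
      (t * Real.exp (-b*t^2)) t := by
    intro t _
    have h := (((hasDerivAt_pow 2 t).const_mul (-b)).exp).const_mul (-(2*b)⁻¹)
    refine h.congr_deriv (Eq.symm ?_)
    field_simp
    ring
  have htend : Tendsto (fun t : ℝ => -(2*b)⁻¹ * Real.exp (-b*t^2)) atTop (𝓝 0) := by
    have h1 : Tendsto (fun t : ℝ => Real.exp (-b*t^2)) atTop (𝓝 0) :=
      Real.tendsto_exp_atBot.comp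
        ((tendsto_pow_atTop two_ne_zero).const_mul_atTop_of_neg (neg_lt_zero.2 hb))
    simpa using h1.const_mul (-(2*b)⁻¹)
  have := MeasureTheory.integral_Ioi_of_hasDerivAt_of_tendsto' hderiv
    ((integrable_mul_exp_neg_mul_sq hb).integrableOn) htend
  simp only [ne_eq, OfNat.ofNat_ne_zero, not_false_eq_true, zero_pow, mul_zero, neg_zero,
    Real.exp_zero, mul_one, zero_sub, neg_neg] at this
  rw [this, one_div]

lemma integrable_sq_exp {b : ℝ} (hb : 0 < b) :
    Integrable (fun t : ℝ => t^2 * Real.exp (-b * t ^ 2)) (volume.restrict (Set.Ioi 0)) := by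
  have h := integrableOn_rpow_mul_exp_neg_mul_sq hb (s := 2) (by norm_num)
  apply h.congr_fun ?_ measurableSet_Ioi
  intro t _
  norm_num [Real.rpow_two]

lemma gauss_mom2 {b : ℝ} (hb : 0 < b) :
    ∫ t in Set.Ioi (0:ℝ), t^2 * Real.exp (-b * t ^ 2) = Real.sqrt (Real.pi / b) / (4 * b) := by
  have hb' : b ≠ 0 := hb.ne'
  have hderiv : ∀ t ∈ Set.Ici (0:ℝ), HasDerivAt (fun t : ℝ => -(2*b)⁻¹ * (t * Real.exp (-b*t^2)))
      (t^2 * Real.exp (-b*t^2) - (2*b)⁻¹ * Real.exp (-b*t^2)) t := by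
    intro t _
    have h := ((hasDerivAt_id t).mul (((hasDerivAt_pow 2 t).const_mul (-b)).exp)).const_mul
      (-(2*b)⁻¹)
    refine h.congr_deriv (Eq.symm ?_)
    simp only [id]
    field_simp
    ring
  have htend : Tendsto (fun t : ℝ => -(2*b)⁻¹ * (t * Real.exp (-b*t^2))) atTop (𝓝 0) := by
    have h1 : Tendsto (fun t : ℝ => t * Real.exp (-b*t^2)) atTop (𝓝 0) := by
      have h2 : Tendsto (fun x : ℝ => Real.exp (-(1/2) * x)) atTop (𝓝 0) := by
        have hm : Tendsto (fun x : ℝ => -(1/2) * x) atTop atBot :=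
          (tendsto_const_mul_atBot_of_neg (show -(1/2:ℝ) < 0 by norm_num)).2 tendsto_id
        exact Real.tendsto_exp_atBot.comp hm
      have h3 := (rpow_mul_exp_neg_mul_sq_isLittleO_exp_neg hb 1).trans_tendsto h2
      apply h3.congr'
      filter_upwards [eventually_ge_atTop (0:ℝ)] with t ht
      rw [Real.rpow_one]
    simpa using h1.const_mul (-(2*b)⁻¹)
  have hint : IntegrableOn (fun t : ℝ => t^2 * Real.exp (-b*t^2) - (2*b)⁻¹ * Real.exp (-b*t^2))
      (Set.Ioi 0) :=
    (integrable_sq_exp hb).sub (((integrable_exp_neg_mul_sq hb).const_mul _).integrableOn)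
  have key := MeasureTheory.integral_Ioi_of_hasDerivAt_of_tendsto' hderiv hint htend
  simp only [zero_mul, mul_zero, sub_zero, zero_sub, neg_neg, neg_zero] at key
  rw [MeasureTheory.integral_sub (integrable_sq_exp hb)
    (((integrable_exp_neg_mul_sq hb).const_mul _).integrableOn)] at key
  rw [MeasureTheory.integral_const_mul, integral_gaussian_Ioi] at key
  have h4 : ∀ s : ℝ, (2*b)⁻¹ * (s/2) = s/(4*b) := fun s => by
    rw [mul_inv, div_eq_mul_inv s, div_eq_mul_inv s, mul_inv]; ring
  linarith [key, h4 (Real.sqrt (Real.pi/b))]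

lemma subgrad {s s0 : ℝ} : min 1 s ≤ min 1 s0 + (if s0 < 1 then (1:ℝ) else 0) * (s - s0) := by
  split_ifs with h
  · rw [min_eq_right h.le]; have := min_le_right (1:ℝ) s; linarith
  · rw [min_eq_left (not_lt.1 h)]; have := min_le_left (1:ℝ) s; linarith

lemma swap_aux {k c : ℝ} (hc : 0 < c) (hk : k^2 = 1 - 2*c) (p : ℕ) :
    Integrable (fun t => ∫ u in (0:ℝ)..1, (t*u)^p * Real.exp (-((1-k^2*u^2)/2) * t^2))
      (volume.restrict (Set.Ioi 0)) ∧
    (∫ t in Set.Ioi (0:ℝ), ∫ u in (0:ℝ)..1, (t*u)^p * Real.exp (-((1-k^2*u^2)/2) * t^2))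
      = ∫ u in (0:ℝ)..1, ∫ t in Set.Ioi (0:ℝ), (t*u)^p * Real.exp (-((1-k^2*u^2)/2) * t^2) := by
  set f : ℝ → ℝ → ℝ := fun t u => (t*u)^p * Real.exp (-((1-k^2*u^2)/2) * t^2) with hf
  show Integrable (fun t => ∫ u in (0:ℝ)..1, f t u) (volume.restrict (Set.Ioi 0)) ∧
    (∫ t in Set.Ioi (0:ℝ), ∫ u in (0:ℝ)..1, f t u)
      = ∫ u in (0:ℝ)..1, ∫ t in Set.Ioi (0:ℝ), f t u
  have hcont : Continuous (Function.uncurry f) := by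
    apply Continuous.mul
    · exact (continuous_fst.mul continuous_snd).pow p
    · apply Real.continuous_exp.comp
      apply Continuous.mul _ (continuous_fst.pow 2)
      exact ((continuous_const.sub (continuous_const.mul (continuous_snd.pow 2))).div_const 2).neg
  have hcont1 : ∀ t, Continuous (fun u => f t u) := fun t =>
    hcont.comp (Continuous.prodMk_right t)
  have hαc : ∀ u ∈ Set.Ioc (0:ℝ) 1, c ≤ (1-k^2*u^2)/2 := by
    intro u hu
    have h1 : (0:ℝ) ≤ k^2*(1-u^2) := mul_nonneg (sq_nonneg k) (by nlinarith [hu.1, hu.2])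
    nlinarith [h1]
  have hsec : ∀ t : ℝ, IntegrableOn (fun u => f t u) (Set.Ioc (0:ℝ) 1) :=
    fun t => (hcont1 t).integrableOn_Ioc
  have hg : Integrable (fun t : ℝ => t^p * Real.exp (-c*t^2)) (volume.restrict (Set.Ioi 0)) := by
    have h := integrableOn_rpow_mul_exp_neg_mul_sq hc (s := p)
      (lt_of_lt_of_le neg_one_lt_zero (Nat.cast_nonneg p))
    apply h.congr_fun ?_ measurableSet_Ioi
    intro t _
    simp [Real.rpow_natCast]
  have hmeas : AEStronglyMeasurable (Function.uncurry f)
      ((volume.restrict (Set.Ioi (0:ℝ))).prod (volume.restrict (Set.Ioc (0:ℝ) 1))) :=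
    hcont.aestronglyMeasurable
  have hbound : ∀ t ∈ Set.Ioi (0:ℝ),
      (∫ u in Set.Ioc (0:ℝ) 1, ‖f t u‖) ≤ t^p * Real.exp (-c*t^2) := by
    intro t ht
    have ht' : 0 < t := mem_Ioi.mp ht
    have h1 : (∫ u in Set.Ioc (0:ℝ) 1, ‖f t u‖) ≤ ∫ _u in Set.Ioc (0:ℝ) 1,
        t^p * Real.exp (-c*t^2) := by
      apply setIntegral_mono_on ((hsec t).norm) (integrableOn_const (by simp))
        measurableSet_Ioc
      intro u hu
      rw [Real.norm_eq_abs, abs_mul, abs_of_nonneg (Real.exp_pos _).le,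
        abs_pow, abs_mul, abs_of_nonneg (le_of_lt ht), abs_of_nonneg hu.1.le]
      apply mul_le_mul
      · exact pow_le_pow_left₀ (mul_nonneg ht'.le hu.1.le) (by nlinarith [hu.2]) p
      · apply Real.exp_le_exp.2
        have := hαc u hu
        nlinarith [sq_nonneg t]
      · positivity
      · exact pow_nonneg ht'.le p
    calc (∫ u in Set.Ioc (0:ℝ) 1, ‖f t u‖) ≤ _ := h1
      _ = t^p * Real.exp (-c*t^2) := by
        rw [setIntegral_const, Real.volume_real_Ioc]
        norm_num
  have hIntProd : Integrable (Function.uncurry f)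
      ((volume.restrict (Set.Ioi (0:ℝ))).prod (volume.restrict (Set.Ioc (0:ℝ) 1))) := by
    rw [integrable_prod_iff hmeas]
    constructor
    · exact Filter.Eventually.of_forall fun t => hsec t
    · apply Integrable.mono' hg (hmeas.norm.integral_prod_right')
      rw [ae_restrict_iff' measurableSet_Ioi]
      apply Filter.Eventually.of_forall
      intro t ht
      rw [Real.norm_eq_abs, abs_of_nonneg (integral_nonneg fun u => norm_nonneg _)]
      exact hbound t ht
  have h01 : ∀ g : ℝ → ℝ, (∫ u in (0:ℝ)..1, g u) = ∫ u in Set.Ioc (0:ℝ) 1, g u :=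
    fun g => intervalIntegral.integral_of_le zero_le_one
  constructor
  · have := hIntProd.integral_prod_left
    apply this.congr
    apply Filter.Eventually.of_forall
    intro t
    exact (h01 (fun u => f t u)).symm
  · calc (∫ t in Set.Ioi (0:ℝ), ∫ u in (0:ℝ)..1, f t u)
        = ∫ t in Set.Ioi (0:ℝ), ∫ u in Set.Ioc (0:ℝ) 1, f t u := by simp only [h01]
      _ = ∫ u in Set.Ioc (0:ℝ) 1, ∫ t in Set.Ioi (0:ℝ), f t u :=
          MeasureTheory.integral_integral_swap hIntProd
      _ = ∫ u in (0:ℝ)..1, ∫ t in Set.Ioi (0:ℝ), f t u := (h01 _).symm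

lemma ftc1 {k c : ℝ} (hc : 0 < c) (hc2 : c < 1/2) (hk2 : k^2 = 1-2*c) :
    ∫ u in (0:ℝ)..1, u/(1-k^2*u^2) = -Real.log (2*c)/(2*k^2) := by
  have hk2pos : 0 < k^2 := by rw [hk2]; linarith
  have hkne : k ≠ 0 := fun h => by rw [h] at hk2pos; simp at hk2pos
  have hpos : ∀ u ∈ Set.uIcc (0:ℝ) 1, 0 < 1 - k^2*u^2 := by
    intro u hu
    rw [Set.uIcc_of_le zero_le_one] at hu
    nlinarith [mul_nonneg hk2pos.le (by nlinarith [hu.1, hu.2] : (0:ℝ) ≤ 1-u^2)]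
  have hderiv : ∀ u ∈ Set.uIcc (0:ℝ) 1, HasDerivAt
      (fun u : ℝ => -(2*k^2)⁻¹ * Real.log (1-k^2*u^2)) (u/(1-k^2*u^2)) u := by
    intro u hu
    have h1 : HasDerivAt (fun u : ℝ => 1-k^2*u^2) (-(k^2*(2*u^1))) u :=
      ((hasDerivAt_pow 2 u).const_mul (k^2)).const_sub 1
    have h2 := (h1.log (hpos u hu).ne').const_mul (-(2*k^2)⁻¹)
    refine h2.congr_deriv (Eq.symm ?_)
    field_simp
  have hint : IntervalIntegrable (fun u : ℝ => u/(1-k^2*u^2)) volume 0 1 := by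
    apply ContinuousOn.intervalIntegrable
    apply ContinuousOn.div continuousOn_id
    · fun_prop
    · exact fun u hu => (hpos u hu).ne'
  have := intervalIntegral.integral_eq_sub_of_hasDerivAt hderiv hint
  rw [this]
  have h1 : (1:ℝ) - k^2*1^2 = 2*c := by rw [hk2]; ring
  have h0 : (1:ℝ) - k^2*0^2 = 1 := by ring
  rw [h1, h0, Real.log_one]
  ring

lemma ftc2 {k c : ℝ} (hc : 0 < c) (hc2 : c < 1/2) (hk2 : k^2 = 1-2*c) (hkpos : 0 < k) :
    ∫ u in (0:ℝ)..1, u^2 * (Real.sqrt (Real.pi/((1-k^2*u^2)/2)) / (4*((1-k^2*u^2)/2)))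
    = Real.sqrt Real.pi/Real.sqrt 2 * (1/(k^2*Real.sqrt (2*c)) - Real.arcsin k/k^3) := by
  have hk2pos : 0 < k^2 := by rw [hk2]; linarith
  have hkne : k ≠ 0 := hkpos.ne'
  have hk1 : k < 1 := by nlinarith
  have hpos : ∀ u ∈ Set.uIcc (0:ℝ) 1, 0 < 1 - k^2*u^2 := by
    intro u hu
    rw [Set.uIcc_of_le zero_le_one] at hu
    nlinarith [mul_nonneg hk2pos.le (by nlinarith [hu.1, hu.2] : (0:ℝ) ≤ 1-u^2)]
  set F : ℝ → ℝ := fun u => Real.sqrt Real.pi/Real.sqrt 2 *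
    (u/(k^2*Real.sqrt (1-k^2*u^2)) - Real.arcsin (k*u)/k^3) with hF
  have hderiv : ∀ u ∈ Set.uIcc (0:ℝ) 1, HasDerivAt F
      (u^2 * (Real.sqrt (Real.pi/((1-k^2*u^2)/2)) / (4*((1-k^2*u^2)/2)))) u := by
    intro u hu
    have hu' : u ∈ Set.Icc (0:ℝ) 1 := by rwa [Set.uIcc_of_le zero_le_one] at hu
    set β := Real.sqrt (1-k^2*u^2) with hβ
    have hβpos : 0 < β := Real.sqrt_pos.2 (hpos u hu)
    have hβ2 : β^2 = 1-k^2*u^2 := Real.sq_sqrt (hpos u hu).le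
    have h1 : HasDerivAt (fun u : ℝ => 1-k^2*u^2) (-(k^2*(2*u^1))) u :=
      ((hasDerivAt_pow 2 u).const_mul (k^2)).const_sub 1
    have hsq : HasDerivAt (fun u : ℝ => Real.sqrt (1-k^2*u^2))
        ((-(k^2*(2*u^1))) / (2*β)) u := h1.sqrt (hpos u hu).ne'
    have hq : HasDerivAt (fun u : ℝ => u/(k^2*Real.sqrt (1-k^2*u^2)))
        ((1*(k^2*β) - u*(k^2*((-(k^2*(2*u^1)))/(2*β))))/(k^2*β)^2) u :=
      (hasDerivAt_id u).div (hsq.const_mul (k^2)) (by positivity)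
    have hku1 : k*u ≠ 1 := by nlinarith [hu'.1, hu'.2]
    have hkum1 : k*u ≠ -1 := by nlinarith [hu'.1, hu'.2]
    have harc0 : HasDerivAt Real.arcsin (1/Real.sqrt (1-(k*u)^2)) (k*u) :=
      Real.hasDerivAt_arcsin hkum1 hku1
    have hlin : HasDerivAt (fun u : ℝ => k*u) k u := by
      simpa using (hasDerivAt_id u).const_mul k
    have harc : HasDerivAt (fun u : ℝ => Real.arcsin (k*u))
        (1/Real.sqrt (1-(k*u)^2) * k) u := harc0.comp u hlin
    have htot := ((hq.sub (harc.div_const (k^3))).const_mul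
      (Real.sqrt Real.pi/Real.sqrt 2))
    refine htot.congr_deriv (Eq.symm ?_)
    have hβku : Real.sqrt (1-(k*u)^2) = β := by rw [hβ]; ring_nf
    rw [hβku]
    have hα : Real.sqrt (Real.pi/((1-k^2*u^2)/2)) = Real.sqrt Real.pi * Real.sqrt 2 / β := by
      rw [show Real.pi/((1-k^2*u^2)/2) = Real.pi*2/β^2 by rw [hβ2]; field_simp,
        Real.sqrt_div (by positivity), Real.sqrt_mul (le_of_lt Real.pi_pos),
        Real.sqrt_sq hβpos.le]
    rw [hα, ← hβ2]
    have h2 : Real.sqrt 2 * Real.sqrt 2 = 2 := Real.mul_self_sqrt (by norm_num)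
    have hQ : Real.sqrt 2 ≠ 0 := by positivity
    have hP := Real.sqrt_nonneg Real.pi
    field_simp
    ring_nf
    rw [Real.sq_sqrt (by norm_num : (0:ℝ) ≤ 2)]
    ring
  have hint : IntervalIntegrable (fun u : ℝ =>
      u^2 * (Real.sqrt (Real.pi/((1-k^2*u^2)/2)) / (4*((1-k^2*u^2)/2)))) volume 0 1 := by
    apply ContinuousOn.intervalIntegrable
    apply ContinuousOn.mul (by fun_prop)
    apply ContinuousOn.div
    · exact (Real.continuous_sqrt).comp_continuousOn
        (ContinuousOn.div continuousOn_const (by fun_prop)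
          (fun u hu => by have := hpos u hu; positivity))
    · fun_prop
    · intro u hu
      have := hpos u hu; positivity
  have := intervalIntegral.integral_eq_sub_of_hasDerivAt hderiv hint
  rw [this, hF]
  simp only [mul_zero, zero_mul, mul_one, one_pow, zero_pow, Real.arcsin_zero, zero_div,
    sub_zero, zero_div]
  rw [show (1:ℝ) - k^2 = 2*c by linarith]


open scoped BigOperators

set_option maxHeartbeats 1000000 in
/-- Lemma 6, inequality (15). -/
theorem stmt_11
    (n : ℕ) (hn : 2 ≤ n) (a : Fin n → Fin n → ℝ)
    (b : Fin n → Fin n → Fin n → Fin n → ℝ)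
    (hb : ∀ j k r s, b j k r s = a j r - a k r - a j s + a k s)
    (γ : ℝ → ℝ)
    (hγ : ∀ x, γ x = (∑ j, ∑ k, ∑ r, ∑ s,
      if j ≠ k ∧ r ≠ s then (b j k r s) ^ 2 * min 1 |x * b j k r s| else 0)
      / ((n : ℝ) ^ 2 * ((n : ℝ) - 1)))
    (c : ℝ) (hc : c ∈ Set.Ioo (0 : ℝ) (1 / 2))
    (ctil : ℝ) (hctil : ctil = Real.sqrt (1 - 2 * c))
    (x : ℝ) :
    (∫ t in Set.Ioi (0 : ℝ), ∫ u in (0:ℝ)..1,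
        t * u * γ (x * t * u) * Real.exp (-(c * t ^ 2 * u ^ 2) - (1 - u ^ 2) * t ^ 2 / 2)) ≤
      -Real.log (2 * c) / (2 * ctil ^ 2) *
        γ (Real.sqrt Real.pi * x / (-Real.log (2 * c) * Real.sqrt c) *
          (1 - Real.sqrt (2 * c) / ctil * Real.arcsin ctil)) := by
  obtain ⟨hc1, hc2⟩ := hc
  have h2c : 0 < 2*c := by linarith
  have h2c1 : 2*c < 1 := by linarith
  have hk2 : ctil^2 = 1 - 2*c := by rw [hctil]; exact Real.sq_sqrt (by linarith)
  have hkpos : 0 < ctil := by rw [hctil]; exact Real.sqrt_pos.2 (by linarith)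
  have hkne : ctil ≠ 0 := hkpos.ne'
  have hk1 : ctil < 1 := by nlinarith
  have hL : 0 < -Real.log (2*c) := by
    have := Real.log_neg h2c h2c1; linarith
  set L := -Real.log (2*c) with hLdef
  set A := 1 - Real.sqrt (2*c)/ctil * Real.arcsin ctil with hAdef
  set y := Real.sqrt Real.pi * x / (L * Real.sqrt c) * A with hydef
  set r := Real.sqrt Real.pi / (L * Real.sqrt c) * A with hrdef
  have hyr : y = x * r := by rw [hydef, hrdef]; ring
  have h2cpos : 0 < Real.sqrt (2*c) := Real.sqrt_pos.2 h2c
  have hAnn : 0 ≤ A := by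
    have harcpos : 0 < Real.arcsin ctil := Real.arcsin_pos.2 hkpos
    have h1 : Real.arcsin ctil < ctil / Real.sqrt (2*c) := by
      have h := Real.lt_tan harcpos (Real.arcsin_lt_pi_div_two.2 hk1)
      rw [Real.tan_arcsin, show 1 - ctil^2 = 2*c by linarith] at h
      exact h
    rw [lt_div_iff₀ h2cpos] at h1
    have h3 : Real.sqrt (2*c)/ctil * Real.arcsin ctil < 1 := by
      rw [div_mul_eq_mul_div, div_lt_one hkpos]
      nlinarith [h1]
    rw [hAdef]; linarith
  have hrnn : 0 ≤ r := by
    rw [hrdef]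
    exact mul_nonneg (div_nonneg (Real.sqrt_nonneg _)
      (mul_nonneg hL.le (Real.sqrt_nonneg _))) hAnn
  have hn2 : (2:ℝ) ≤ (n:ℝ) := by exact_mod_cast hn
  have hD : 0 < (n:ℝ)^2*((n:ℝ)-1) := by nlinarith
  have hγnn : ∀ z, 0 ≤ γ z := by
    intro z; rw [hγ]
    apply div_nonneg _ hD.le
    apply Finset.sum_nonneg; intro j _
    apply Finset.sum_nonneg; intro k _
    apply Finset.sum_nonneg; intro p _
    apply Finset.sum_nonneg; intro s _
    split_ifs with h
    · exact mul_nonneg (sq_nonneg _) (le_min zero_le_one (abs_nonneg _))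
    · exact le_refl 0
  have hγc : Continuous γ := by
    have hfe : γ = fun z => (∑ j, ∑ k, ∑ p, ∑ s,
        if j ≠ k ∧ p ≠ s then (b j k p s) ^ 2 * min 1 |z * b j k p s| else 0)
        / ((n : ℝ) ^ 2 * ((n : ℝ) - 1)) := funext hγ
    rw [hfe]
    apply Continuous.div_const
    apply continuous_finset_sum; intro j _
    apply continuous_finset_sum; intro k _
    apply continuous_finset_sum; intro p _
    apply continuous_finset_sum; intro s _
    split_ifs with h
    · exact continuous_const.mul
        (continuous_const.min ((continuous_id.mul continuous_const).abs))
    · exact continuous_const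
  set E := (∑ j, ∑ k, ∑ p, ∑ s, if j ≠ k ∧ p ≠ s then
      (if |x * b j k p s| * r < 1 then (1:ℝ) else 0) * (b j k p s)^2 * |x * b j k p s|
      else 0) / ((n:ℝ)^2*((n:ℝ)-1)) with hEdef
  have hEnn : 0 ≤ E := by
    rw [hEdef]
    apply div_nonneg _ hD.le
    apply Finset.sum_nonneg; intro j _
    apply Finset.sum_nonneg; intro k _
    apply Finset.sum_nonneg; intro p _
    apply Finset.sum_nonneg; intro s _
    split_ifs with h h'
    · exact mul_nonneg (mul_nonneg zero_le_one (sq_nonneg _)) (abs_nonneg _)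
    · simp
    · exact le_refl 0
  have hkey : ∀ t u : ℝ, 0 ≤ t → 0 ≤ u → γ (x*t*u) ≤ γ y + E * (t*u - r) := by
    intro t u ht hu
    rw [hγ (x*t*u), hγ y, hEdef, div_mul_eq_mul_div, ← add_div]
    rw [div_le_div_iff_of_pos_right hD]
    calc (∑ j, ∑ k, ∑ p, ∑ s, if j ≠ k ∧ p ≠ s then
            (b j k p s) ^ 2 * min 1 |x*t*u * b j k p s| else 0)
        ≤ ∑ j, ∑ k, ∑ p, ∑ s, ((if j ≠ k ∧ p ≠ s then
            (b j k p s) ^ 2 * min 1 |y * b j k p s| else 0) +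
          (if j ≠ k ∧ p ≠ s then
            (if |x * b j k p s| * r < 1 then (1:ℝ) else 0) * (b j k p s)^2 * |x * b j k p s|
            else 0) * (t*u - r)) := by
          refine Finset.sum_le_sum fun j _ => Finset.sum_le_sum fun k _ =>
            Finset.sum_le_sum fun p _ => Finset.sum_le_sum fun s _ => ?_
          by_cases h : j ≠ k ∧ p ≠ s
          · simp only [if_pos h]
            set v := b j k p s with hv
            have habs1 : |x*t*u*v| = |x*v| * (t*u) := by
              rw [show x*t*u*v = (x*v)*(t*u) by ring, abs_mul,
                abs_of_nonneg (mul_nonneg ht hu)]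
            have habs2 : |y*v| = |x*v| * r := by
              rw [hyr, show x*r*v = (x*v)*r by ring, abs_mul, abs_of_nonneg hrnn]
            rw [habs1, habs2]
            refine le_trans (mul_le_mul_of_nonneg_left
              (subgrad (s := |x*v| * (t*u)) (s0 := |x*v| * r)) (sq_nonneg v)) (le_of_eq ?_)
            ring
          · simp only [if_neg h]; simp
      _ = _ := by
          simp only [Finset.sum_add_distrib, ← Finset.sum_mul]
  have hWrw : ∀ t u : ℝ, Real.exp (-(c*t^2*u^2) - (1-u^2)*t^2/2)
      = Real.exp (-((1-ctil^2*u^2)/2)*t^2) := by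
    intro t u; rw [hk2]; congr 1; ring
  obtain ⟨hI1int, hI1swap⟩ := swap_aux hc1 hk2 1
  obtain ⟨hI2int, hI2swap⟩ := swap_aux hc1 hk2 2
  have hαpos : ∀ u ∈ Set.uIcc (0:ℝ) 1, 0 < (1-ctil^2*u^2)/2 := by
    intro u hu
    rw [Set.uIcc_of_le zero_le_one] at hu
    have : 0 ≤ ctil^2*(1-u^2) := mul_nonneg (sq_nonneg _) (by nlinarith [hu.1, hu.2])
    nlinarith
  have hI1 : (∫ t in Set.Ioi (0:ℝ), ∫ u in (0:ℝ)..1,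
      (t*u)^1 * Real.exp (-((1-ctil^2*u^2)/2)*t^2)) = L/(2*ctil^2) := by
    rw [hI1swap]
    have heq : Set.EqOn (fun u : ℝ => ∫ t in Set.Ioi (0:ℝ),
        (t*u)^1 * Real.exp (-((1-ctil^2*u^2)/2)*t^2))
        (fun u : ℝ => u/(1-ctil^2*u^2)) (Set.uIcc 0 1) := by
      intro u hu
      have hα := hαpos u hu
      calc (∫ t in Set.Ioi (0:ℝ), (t*u)^1 * Real.exp (-((1-ctil^2*u^2)/2)*t^2))
          = ∫ t in Set.Ioi (0:ℝ), u*(t * Real.exp (-((1-ctil^2*u^2)/2)*t^2)) := by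
            apply setIntegral_congr_fun measurableSet_Ioi
            intro t _; ring
        _ = u * ∫ t in Set.Ioi (0:ℝ), t * Real.exp (-((1-ctil^2*u^2)/2)*t^2) :=
            MeasureTheory.integral_const_mul u _
        _ = u * (1/(2*((1-ctil^2*u^2)/2))) := by rw [gauss_mom1 hα]
        _ = u/(1-ctil^2*u^2) := by rw [show (2*((1-ctil^2*u^2)/2)) = 1-ctil^2*u^2 by ring]; ring
    rw [intervalIntegral.integral_congr heq, ftc1 hc1 hc2 hk2]
  have hI2 : (∫ t in Set.Ioi (0:ℝ), ∫ u in (0:ℝ)..1,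
      (t*u)^2 * Real.exp (-((1-ctil^2*u^2)/2)*t^2))
      = Real.sqrt Real.pi/Real.sqrt 2 *
        (1/(ctil^2*Real.sqrt (2*c)) - Real.arcsin ctil/ctil^3) := by
    rw [hI2swap]
    have heq : Set.EqOn (fun u : ℝ => ∫ t in Set.Ioi (0:ℝ),
        (t*u)^2 * Real.exp (-((1-ctil^2*u^2)/2)*t^2))
        (fun u : ℝ => u^2 * (Real.sqrt (Real.pi/((1-ctil^2*u^2)/2)) / (4*((1-ctil^2*u^2)/2))))
        (Set.uIcc 0 1) := by
      intro u hu
      have hα := hαpos u hu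
      calc (∫ t in Set.Ioi (0:ℝ), (t*u)^2 * Real.exp (-((1-ctil^2*u^2)/2)*t^2))
          = ∫ t in Set.Ioi (0:ℝ), u^2*(t^2 * Real.exp (-((1-ctil^2*u^2)/2)*t^2)) := by
            apply setIntegral_congr_fun measurableSet_Ioi
            intro t _; ring
        _ = u^2 * ∫ t in Set.Ioi (0:ℝ), t^2 * Real.exp (-((1-ctil^2*u^2)/2)*t^2) :=
            MeasureTheory.integral_const_mul _ _
        _ = u^2 * (Real.sqrt (Real.pi/((1-ctil^2*u^2)/2)) / (4*((1-ctil^2*u^2)/2))) := by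
            rw [gauss_mom2 hα]
    rw [intervalIntegral.integral_congr heq, ftc2 hc1 hc2 hk2 hkpos]
  have hrel : Real.sqrt Real.pi/Real.sqrt 2 *
      (1/(ctil^2*Real.sqrt (2*c)) - Real.arcsin ctil/ctil^3) = r * (L/(2*ctil^2)) := by
    rw [hrdef, hAdef, Real.sqrt_mul (by norm_num : (0:ℝ) ≤ 2)]
    have h2 : Real.sqrt 2 ≠ 0 := by positivity
    have hcne : Real.sqrt c ≠ 0 := by positivity
    have hLne : L ≠ 0 := hL.ne'
    field_simp
    ring_nf
    simp only [show (Real.sqrt 2)^3 = 2*Real.sqrt 2 from by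
      rw [pow_succ, Real.sq_sqrt (by norm_num : (0:ℝ) ≤ 2)],
      Real.sq_sqrt (by norm_num : (0:ℝ) ≤ 2)]
    ring
  have hfc : ∀ (t : ℝ) (p : ℕ), Continuous fun u : ℝ =>
      (t*u)^p * Real.exp (-((1-ctil^2*u^2)/2)*t^2) := by
    intro t p; fun_prop
  calc (∫ t in Set.Ioi (0:ℝ), ∫ u in (0:ℝ)..1,
        t * u * γ (x * t * u) * Real.exp (-(c * t ^ 2 * u ^ 2) - (1 - u ^ 2) * t ^ 2 / 2))
      ≤ ∫ t in Set.Ioi (0:ℝ),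
          (γ y * (∫ u in (0:ℝ)..1, (t*u)^1 * Real.exp (-((1-ctil^2*u^2)/2)*t^2))
          + E * ((∫ u in (0:ℝ)..1, (t*u)^2 * Real.exp (-((1-ctil^2*u^2)/2)*t^2))
            - r * ∫ u in (0:ℝ)..1, (t*u)^1 * Real.exp (-((1-ctil^2*u^2)/2)*t^2))) := by
        apply MeasureTheory.integral_mono_of_nonneg
        · rw [Filter.EventuallyLE, ae_restrict_iff' measurableSet_Ioi]
          apply Filter.Eventually.of_forall
          intro t ht
          have ht' := le_of_lt (Set.mem_Ioi.mp ht)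
          simp only [Pi.zero_apply]
          apply intervalIntegral.integral_nonneg zero_le_one
          intro u hu
          exact mul_nonneg (mul_nonneg (mul_nonneg ht' hu.1) (hγnn _)) (Real.exp_pos _).le
        · exact (hI1int.const_mul (γ y)).add
            ((hI2int.sub (hI1int.const_mul r)).const_mul E)
        · rw [Filter.EventuallyLE, ae_restrict_iff' measurableSet_Ioi]
          apply Filter.Eventually.of_forall
          intro t ht
          have ht' := le_of_lt (Set.mem_Ioi.mp ht)
          simp only [hWrw]
          have hii1 : IntervalIntegrable (fun u : ℝ =>
              (t*u)^1 * Real.exp (-((1-ctil^2*u^2)/2)*t^2)) volume 0 1 :=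
            (hfc t 1).intervalIntegrable 0 1
          have hii2 : IntervalIntegrable (fun u : ℝ =>
              (t*u)^2 * Real.exp (-((1-ctil^2*u^2)/2)*t^2)) volume 0 1 :=
            (hfc t 2).intervalIntegrable 0 1
          have hGc : Continuous fun u : ℝ =>
              t * u * γ (x * t * u) * Real.exp (-((1-ctil^2*u^2)/2)*t^2) := by
            apply Continuous.mul
            · exact (continuous_const.mul continuous_id).mul
                (hγc.comp (continuous_const.mul continuous_id))
            · fun_prop
          calc (∫ u in (0:ℝ)..1, t * u * γ (x * t * u) *
                  Real.exp (-((1-ctil^2*u^2)/2)*t^2))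
              ≤ ∫ u in (0:ℝ)..1,
                  (γ y * ((t*u)^1 * Real.exp (-((1-ctil^2*u^2)/2)*t^2))
                  + E * ((t*u)^2 * Real.exp (-((1-ctil^2*u^2)/2)*t^2)
                    - r * ((t*u)^1 * Real.exp (-((1-ctil^2*u^2)/2)*t^2)))) := by
                apply intervalIntegral.integral_mono_on zero_le_one
                  (hGc.intervalIntegrable (0:ℝ) 1)
                  (((hii1.const_mul (γ y)).add
                    ((hii2.sub (hii1.const_mul r)).const_mul E)))
                intro u hu
                have h1 := hkey t u ht' hu.1
                have hnn : (0:ℝ) ≤ t*u*Real.exp (-((1-ctil^2*u^2)/2)*t^2) :=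
                  mul_nonneg (mul_nonneg ht' hu.1) (Real.exp_pos _).le
                calc t * u * γ (x * t * u) * Real.exp (-((1-ctil^2*u^2)/2)*t^2)
                    = γ (x*t*u) * (t*u*Real.exp (-((1-ctil^2*u^2)/2)*t^2)) := by ring
                  _ ≤ (γ y + E * (t*u - r)) * (t*u*Real.exp (-((1-ctil^2*u^2)/2)*t^2)) :=
                      mul_le_mul_of_nonneg_right h1 hnn
                  _ = γ y * ((t*u)^1 * Real.exp (-((1-ctil^2*u^2)/2)*t^2))
                      + E * ((t*u)^2 * Real.exp (-((1-ctil^2*u^2)/2)*t^2)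
                        - r * ((t*u)^1 * Real.exp (-((1-ctil^2*u^2)/2)*t^2))) := by ring
            _ = γ y * (∫ u in (0:ℝ)..1, (t*u)^1 * Real.exp (-((1-ctil^2*u^2)/2)*t^2))
                + E * ((∫ u in (0:ℝ)..1, (t*u)^2 * Real.exp (-((1-ctil^2*u^2)/2)*t^2))
                  - r * ∫ u in (0:ℝ)..1, (t*u)^1 * Real.exp (-((1-ctil^2*u^2)/2)*t^2)) := by
                rw [intervalIntegral.integral_add (hii1.const_mul (γ y))
                  ((hii2.sub (hii1.const_mul r)).const_mul E),
                  intervalIntegral.integral_const_mul, intervalIntegral.integral_const_mul,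
                  intervalIntegral.integral_sub hii2 (hii1.const_mul r),
                  intervalIntegral.integral_const_mul]
    _ = γ y * (L/(2*ctil^2)) + E * ((Real.sqrt Real.pi/Real.sqrt 2 *
          (1/(ctil^2*Real.sqrt (2*c)) - Real.arcsin ctil/ctil^3)) - r * (L/(2*ctil^2))) := by
        have hg1 : Integrable (fun t => γ y * ∫ u in (0:ℝ)..1,
            (t*u)^1 * Real.exp (-((1-ctil^2*u^2)/2)*t^2)) (volume.restrict (Set.Ioi 0)) :=
          hI1int.const_mul (γ y)
        have hg2 : Integrable (fun t => (∫ u in (0:ℝ)..1,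
            (t*u)^2 * Real.exp (-((1-ctil^2*u^2)/2)*t^2))
            - r * ∫ u in (0:ℝ)..1, (t*u)^1 * Real.exp (-((1-ctil^2*u^2)/2)*t^2))
            (volume.restrict (Set.Ioi 0)) := hI2int.sub (hI1int.const_mul r)
        rw [MeasureTheory.integral_add hg1 (hg2.const_mul E),
          MeasureTheory.integral_const_mul, MeasureTheory.integral_const_mul,
          MeasureTheory.integral_sub hI2int (hI1int.const_mul r),
          MeasureTheory.integral_const_mul, hI1, hI2]
    _ = L / (2 * ctil ^ 2) * γ y := by
        rw [hrel]; ring
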